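/- For n ≥ 1, the number of partitions of n+1 with at least two parts and all parts ≥ 2 equals the number of partitions of n with at least one part equal to 1 and at least one part > 1 such that the number of unit parts is strictly less than the smallest part exceeding 1. -/

import Mathlib

open Multiset

/-- `s` is the smallest part of the partition `p`. -/
def IsSmallest {n : ℕ} (s : ℕ) (p : Nat.Partition n) : Prop :=
  s ∈ p.parts ∧ ∀ x ∈ p.parts, s ≤ x

/-- A partition is of the "Second Kind" if it has exactly one part or its smallest part is
strictly less than every other part, i.e. its smallest part occurs exactly once. -/
def SecondKind {n : ℕ} (p : Nat.Partition n) : Prop :=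
  ∃ s, IsSmallest s p ∧ p.parts.count s = 1

/-- Second kind for the second method: the number ℵ of unit parts satisfies
`1 ≤ ℵ < m` where `m` is the smallest part greater than 1. -/
def SecondKind2 {n : ℕ} (p : Nat.Partition n) : Prop :=
  ∃ m ∈ p.parts, 1 < m ∧ (∀ x ∈ p.parts, 1 < x → m ≤ x) ∧
    1 ≤ p.parts.count 1 ∧ p.parts.count 1 < m

/-- A partition is of the "First Kind" if it has at least two parts and its two smallest
parts are equal, i.e. its smallest part occurs at least twice. -/
def FirstKind {n : ℕ} (p : Nat.Partition n) : Prop :=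
  ∃ s, IsSmallest s p ∧ 2 ≤ p.parts.count s

/-- Parts of the forward map: remove one copy of the smallest part `m`, add `m - 1` ones. -/
noncomputable def fwdParts (p : Multiset ℕ) : Multiset ℕ :=
  p.erase (sInf {x | x ∈ p}) + replicate (sInf {x | x ∈ p} - 1) 1

/-- Parts of the backward map: remove all ones (say `k` of them), add a part `k + 1`. -/
def bwdParts (p : Multiset ℕ) : Multiset ℕ :=
  p.filter (fun x => ¬ x = 1) + {p.count 1 + 1}

section helpers

variable {n : ℕ}

lemma fwd_pos (α : Nat.Partition (n + 1)) (hall : ∀ x ∈ α.parts, 2 ≤ x) :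
    ∀ i ∈ fwdParts α.parts, 0 < i := by
  intro i hi
  rcases mem_add.mp hi with h | h
  · exact Nat.lt_of_lt_of_le Nat.zero_lt_two (hall i (mem_of_mem_erase h))
  · simp [eq_of_mem_replicate h]

lemma fwd_sum (α : Nat.Partition (n + 1)) (h2 : 2 ≤ Multiset.card α.parts)
    (hall : ∀ x ∈ α.parts, 2 ≤ x) : (fwdParts α.parts).sum = n := by
  have h0 : 0 < Multiset.card α.parts := by omega
  have hne : {x | x ∈ α.parts}.Nonempty := by
    rcases Multiset.card_pos_iff_exists_mem.mp h0 with ⟨a, ha⟩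
    exact ⟨a, ha⟩
  set m := sInf {x | x ∈ α.parts} with hmdef
  have hm : m ∈ α.parts := Nat.sInf_mem hne
  have hm2 : 2 ≤ m := hall m hm
  have hsum : m + (α.parts.erase m).sum = n + 1 := by
    have := congrArg Multiset.sum (Multiset.cons_erase hm)
    rw [α.parts_sum] at this
    simpa using this
  rw [fwdParts, ← hmdef, Multiset.sum_add, sum_replicate, smul_eq_mul, mul_one]
  omega

lemma fwd_count1 (α : Nat.Partition (n + 1)) (hall : ∀ x ∈ α.parts, 2 ≤ x) :
    (fwdParts α.parts).count 1 = sInf {x | x ∈ α.parts} - 1 := by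
  set m := sInf {x | x ∈ α.parts} with hmdef
  have h1not : (1 : ℕ) ∉ α.parts.erase m := fun h =>
    absurd (hall 1 (mem_of_mem_erase h)) (by norm_num)
  simp only [fwdParts, ← hmdef, count_add, count_replicate, if_pos rfl]
  rw [Multiset.count_eq_zero_of_notMem h1not]
  simp

lemma fwd_sk2 (α : Nat.Partition (n + 1)) (h2 : 2 ≤ Multiset.card α.parts)
    (hall : ∀ x ∈ α.parts, 2 ≤ x) :
    ∃ m ∈ fwdParts α.parts, 1 < m ∧ (∀ x ∈ fwdParts α.parts, 1 < x → m ≤ x) ∧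
      1 ≤ (fwdParts α.parts).count 1 ∧ (fwdParts α.parts).count 1 < m := by
  have h0 : 0 < Multiset.card α.parts := by omega
  have hne : {x | x ∈ α.parts}.Nonempty := by
    rcases Multiset.card_pos_iff_exists_mem.mp h0 with ⟨a, ha⟩
    exact ⟨a, ha⟩
  set m := sInf {x | x ∈ α.parts} with hmdef
  have hm : m ∈ α.parts := Nat.sInf_mem hne
  have hm2 : 2 ≤ m := hall m hm
  have hmin : ∀ x ∈ α.parts, m ≤ x := fun x hx => Nat.sInf_le hx
  have hcount1 : (fwdParts α.parts).count 1 = m - 1 := fwd_count1 α hall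
  have hcE : Multiset.card (α.parts.erase m) = Multiset.card α.parts - 1 := by
    rw [Multiset.card_erase_of_mem hm, Nat.pred_eq_sub_one]
  have h0' : 0 < Multiset.card (α.parts.erase m) := by omega
  have hne' : {x | x ∈ α.parts.erase m}.Nonempty := by
    rcases Multiset.card_pos_iff_exists_mem.mp h0' with ⟨a, ha⟩
    exact ⟨a, ha⟩
  set m' := sInf {x | x ∈ α.parts.erase m} with hm'def
  have hm' : m' ∈ α.parts.erase m := Nat.sInf_mem hne'
  have hm'2 : 2 ≤ m' := hall m' (mem_of_mem_erase hm')
  have hmm' : m ≤ m' := hmin m' (mem_of_mem_erase hm')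
  refine ⟨m', ?_, by omega, ?_, by omega, by omega⟩
  · exact mem_add.mpr (Or.inl (by simpa [fwdParts, ← hmdef] using hm'))
  · intro x hx hx1
    rcases mem_add.mp hx with h | h
    · exact Nat.sInf_le h
    · exact absurd (eq_of_mem_replicate h) (by omega)

lemma bwd_pos (β : Nat.Partition n) : ∀ i ∈ bwdParts β.parts, 0 < i := by
  intro i hi
  rcases mem_add.mp hi with h | h
  · exact β.parts_pos (Multiset.mem_of_mem_filter h)
  · simp at h; omega

lemma bwd_split (β : Nat.Partition n) :
    β.parts.filter (fun x => ¬ x = 1) + replicate (β.parts.count 1) 1 = β.parts := by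
  have h1 := Multiset.filter_add_not (fun x => x = 1) β.parts
  have h2 := Multiset.filter_eq' β.parts 1
  rw [← h2, add_comm]
  exact h1

lemma bwd_sum (β : Nat.Partition n) : (bwdParts β.parts).sum = n + 1 := by
  have hsum : (β.parts.filter (fun x => ¬ x = 1)).sum + β.parts.count 1 = n := by
    have := congrArg Multiset.sum (bwd_split β)
    rw [β.parts_sum] at this
    simpa using this
  rw [bwdParts, Multiset.sum_add, Multiset.sum_singleton]
  omega

lemma bwd_cond (β : Nat.Partition n) (hβ : SecondKind2 β) :
    2 ≤ Multiset.card (bwdParts β.parts) ∧ ∀ x ∈ bwdParts β.parts, 2 ≤ x := by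
  obtain ⟨m, hm, hm1, hmin, hk1, hkm⟩ := hβ
  constructor
  · have hmf : m ∈ β.parts.filter (fun x => ¬ x = 1) :=
      Multiset.mem_filter.mpr ⟨hm, by omega⟩
    have h1 : 0 < Multiset.card (β.parts.filter (fun x => ¬ x = 1)) :=
      Multiset.card_pos_iff_exists_mem.mpr ⟨m, hmf⟩
    rw [bwdParts, Multiset.card_add, Multiset.card_singleton]
    omega
  · intro x hx
    rcases mem_add.mp hx with h | h
    · have h1 := β.parts_pos (Multiset.mem_of_mem_filter h)
      have h2 := (Multiset.mem_filter.mp h).2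
      omega
    · simp only [Multiset.mem_singleton] at h
      omega

/-- The forward map on subtypes. -/
noncomputable def fwd (n : ℕ)
    (α : {α : Nat.Partition (n + 1) // 2 ≤ Multiset.card α.parts ∧ ∀ x ∈ α.parts, 2 ≤ x}) :
    {β : Nat.Partition n // SecondKind2 β} :=
  ⟨⟨fwdParts α.1.parts, fun {i} h => fwd_pos α.1 α.2.2 i h, fwd_sum α.1 α.2.1 α.2.2⟩,
    fwd_sk2 α.1 α.2.1 α.2.2⟩

/-- The backward map on subtypes. -/
def bwd (n : ℕ) (β : {β : Nat.Partition n // SecondKind2 β}) :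
    {α : Nat.Partition (n + 1) // 2 ≤ Multiset.card α.parts ∧ ∀ x ∈ α.parts, 2 ≤ x} :=
  ⟨⟨bwdParts β.1.parts, fun {i} h => bwd_pos β.1 i h, bwd_sum β.1⟩, bwd_cond β.1 β.2⟩

end helpers

/-- For `n ≥ 1`, the number of partitions of `n+1` with at least two parts and all parts
at least 2 equals the number of Second-Kind (second method) partitions of `n`. -/
theorem stmt15 (n : ℕ) (hn : 1 ≤ n) :
    Nat.card {α : Nat.Partition (n + 1) //
        2 ≤ Multiset.card α.parts ∧ ∀ x ∈ α.parts, 2 ≤ x} =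
      Nat.card {β : Nat.Partition n // SecondKind2 β} := by
  apply Nat.card_congr
  refine ⟨fwd n, bwd n, ?_, ?_⟩
  · -- left inverse
    rintro ⟨α, h2, hall⟩
    apply Subtype.ext
    apply Nat.Partition.ext
    show bwdParts (fwdParts α.parts) = α.parts
    have h0 : 0 < Multiset.card α.parts := by omega
    have hne : {x | x ∈ α.parts}.Nonempty := by
      rcases Multiset.card_pos_iff_exists_mem.mp h0 with ⟨a, ha⟩
      exact ⟨a, ha⟩
    set m := sInf {x | x ∈ α.parts} with hmdef
    have hm : m ∈ α.parts := Nat.sInf_mem hne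
    have hm2 : 2 ≤ m := hall m hm
    have h1not : (1 : ℕ) ∉ α.parts.erase m := fun h =>
      absurd (hall 1 (mem_of_mem_erase h)) (by norm_num)
    have hfilter : (fwdParts α.parts).filter (fun x => ¬ x = 1) = α.parts.erase m := by
      simp only [fwdParts, ← hmdef, Multiset.filter_add]
      rw [Multiset.filter_eq_self.mpr, Multiset.filter_eq_nil.mpr, add_zero]
      · intro a ha
        have := eq_of_mem_replicate ha
        simp [this]
      · intro a ha h
        exact h1not (h ▸ ha)
    have hcount1 : (fwdParts α.parts).count 1 = m - 1 := fwd_count1 α hall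
    rw [bwdParts, hfilter, hcount1]
    have hmm : m - 1 + 1 = m := by omega
    rw [hmm, add_comm, Multiset.singleton_add, Multiset.cons_erase hm]
  · -- right inverse
    rintro ⟨β, hβ⟩
    apply Subtype.ext
    apply Nat.Partition.ext
    show fwdParts (bwdParts β.parts) = β.parts
    obtain ⟨m, hm, hm1, hmin, hk1, hkm⟩ := hβ
    set k := β.parts.count 1 with hkdef
    have hmem : ∀ x ∈ bwdParts β.parts, k + 1 ≤ x := by
      intro x hx
      rcases mem_add.mp hx with h | h
      · have h1 := (Multiset.mem_filter.mp h).2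
        have h2 := β.parts_pos (Multiset.mem_of_mem_filter h)
        have h3 : 1 < x := by omega
        have := hmin x (Multiset.mem_of_mem_filter h) h3
        omega
      · simp only [Multiset.mem_singleton] at h
        omega
    have hk1mem : k + 1 ∈ bwdParts β.parts := mem_add.mpr (Or.inr (by simpa using hkdef))
    have hne2 : {x | x ∈ bwdParts β.parts}.Nonempty := ⟨k + 1, by exact hk1mem⟩
    have hinf : sInf {x | x ∈ bwdParts β.parts} = k + 1 := by
      apply le_antisymm (Nat.sInf_le hk1mem)
      exact hmem _ (Nat.sInf_mem hne2)
    have herase : (bwdParts β.parts).erase (k + 1) = β.parts.filter (fun x => ¬ x = 1) := by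
      rw [bwdParts, add_comm, Multiset.singleton_add, Multiset.erase_cons_head]
    rw [fwdParts, hinf, herase]
    simp only [Nat.add_sub_cancel]
    rw [hkdef]
    exact bwd_split β
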